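/- arXiv:2504.04049 — 3 statements merged into one kernel-verified Lean document; each statement's English description precedes it below -/
import Mathlib

section
/- Let (d_{n,k}) = (g; f_1,…,f_ℓ) be a multiple Riordan array and let (d̂_{n,k}) be its compression, d̂_{n,k} = d_{nℓ−(ℓ−1)k, k}. Then for all n ≥ k ≥ 0, writing k = qℓ + m with 0 ≤ m ≤ ℓ−1: d̂_{n,k} = [t^n]( ĝ · f̂_1 ⋯ f̂_m · (f̂_1 f̂_2 ⋯ f̂_ℓ)^q ) (empty product equal to 1, so d̂_{n,0} = [t^n] ĝ), where ĝ = Σ_{k≥0} g_k t^k and f̂_i = Σ_{k≥0} f_{i,k} t^{k+1}. -/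
open PowerSeries Finset

/-- Formal substitution `F(u)`: for `u` with zero constant term, the `n`-th coefficient of
`F(u)` is `∑_{k ≤ n} F_k · [t^n] u^k`. -/
noncomputable def psComp {K : Type*} [CommRing K] (F u : K⟦X⟧) : K⟦X⟧ :=
  PowerSeries.mk fun n => ∑ k ∈ Finset.range (n + 1), coeff k F * coeff n (u ^ k)

/-- Entry `d_{n,k}` of the multiple Riordan array `(g; f_0, …, f_{ℓ-1})`: the `k`-th column,
`k = qℓ + m`, has generating function `g · f_0⋯f_{m-1} · (f_0⋯f_{ℓ-1})^q`. -/
noncomputable def mrEntry {K : Type*} [CommRing K] (ℓ : ℕ) (g : K⟦X⟧) (f : ℕ → K⟦X⟧)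
    (n k : ℕ) : K :=
  coeff n (g * (∏ i ∈ Finset.range (k % ℓ), f i) * (∏ i ∈ Finset.range ℓ, f i) ^ (k / ℓ))


section Aux
variable {K : Type*} [CommRing K]

def mySupp (ℓ r : ℕ) (A : K⟦X⟧) : Prop :=
  ∀ m : ℕ, (∀ j : ℕ, m ≠ ℓ * j + r) → coeff m A = 0

noncomputable def myHat (ℓ r : ℕ) (A : K⟦X⟧) : K⟦X⟧ :=
  PowerSeries.mk fun n => if n < r then 0 else coeff (ℓ * (n - r) + r) A

lemma sum_image_range {β : Type*} [AddCommMonoid β] (F : ℕ → β) (N M : ℕ) (g : ℕ → ℕ)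
    (hinj : ∀ x ∈ range (M + 1), ∀ y ∈ range (M + 1), g x = g y → x = y)
    (hsub : ∀ j ≤ M, g j ≤ N)
    (h0 : ∀ x ≤ N, (∀ j ≤ M, x ≠ g j) → F x = 0) :
    ∑ x ∈ range (N + 1), F x = ∑ j ∈ range (M + 1), F (g j) := by
  rw [← Finset.sum_image hinj]
  apply (Finset.sum_subset ?_ ?_).symm
  · intro x hx
    simp only [mem_image, mem_range] at hx ⊢
    obtain ⟨j, hj, rfl⟩ := hx
    exact Nat.lt_succ_of_le (hsub j (Nat.lt_succ_iff.mp hj))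
  · intro x hx hnx
    simp only [mem_image, mem_range] at hx hnx
    exact h0 x (Nat.lt_succ_iff.mp hx)
      (fun j hj hxj => hnx ⟨j, Nat.lt_succ_of_le hj, hxj.symm⟩)

lemma mySupp_mul {ℓ r s : ℕ} {A B : K⟦X⟧} (hA : mySupp ℓ r A) (hB : mySupp ℓ s B) :
    mySupp ℓ (r + s) (A * B) := by
  intro m hm
  rw [coeff_mul]
  apply Finset.sum_eq_zero
  intro p hp
  rw [Finset.HasAntidiagonal.mem_antidiagonal] at hp
  by_cases h1 : ∀ j, p.1 ≠ ℓ * j + r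
  · rw [hA p.1 h1, zero_mul]
  · push_neg at h1
    obtain ⟨j1, hj1⟩ := h1
    by_cases h2 : ∀ j, p.2 ≠ ℓ * j + s
    · rw [hB p.2 h2, mul_zero]
    · push_neg at h2
      obtain ⟨j2, hj2⟩ := h2
      exact absurd (by rw [← hp, hj1, hj2]; ring) (hm (j1 + j2))

lemma myHat_mul {ℓ r s : ℕ} (hs : s < ℓ) {A : K⟦X⟧} (B : K⟦X⟧) (hA : mySupp ℓ r A) :
    myHat ℓ r A * myHat ℓ s B = myHat ℓ (r + s) (A * B) := by
  have hℓ : 0 < ℓ := lt_of_le_of_lt (Nat.zero_le s) hs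
  ext n
  rw [coeff_mul, Finset.Nat.sum_antidiagonal_eq_sum_range_succ_mk]
  simp only [myHat, coeff_mk]
  by_cases hn : n < r + s
  · rw [if_pos hn]
    apply Finset.sum_eq_zero
    intro a ha
    rw [mem_range] at ha
    by_cases h1 : a < r
    · rw [if_pos h1, zero_mul]
    · rw [if_neg h1, if_pos (by omega), mul_zero]
  · rw [if_neg hn]
    set M := n - (r + s) with hM
    rw [coeff_mul, Finset.Nat.sum_antidiagonal_eq_sum_range_succ_mk]
    have LHS : (∑ a ∈ range (n + 1),
        (if a < r then (0:K) else coeff (ℓ * (a - r) + r) A) *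
          (if n - a < s then (0:K) else coeff (ℓ * (n - a - s) + s) B)) =
        ∑ j ∈ range (M + 1), coeff (ℓ * j + r) A * coeff (ℓ * (M - j) + s) B := by
      rw [sum_image_range _ n M (· + r) ?_ ?_ ?_]
      · apply Finset.sum_congr rfl
        intro j hj
        rw [mem_range] at hj
        beta_reduce
        rw [if_neg (by omega), if_neg (by omega)]
        have e1 : j + r - r = j := by omega
        have e2 : n - (j + r) - s = M - j := by omega
        rw [e1, e2]
      · intro x _ y _ h
        beta_reduce at h
        omega
      · intro j hj
        beta_reduce
        omega
      · intro x hx hnx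
        beta_reduce at hnx
        by_cases h1 : x < r
        · rw [if_pos h1, zero_mul]
        · rw [if_neg h1]
          have : n - x < s := by
            have := hnx (x - r)
            omega
          rw [if_pos this, mul_zero]
    rw [LHS]
    apply Eq.symm
    rw [sum_image_range _ (ℓ * M + (r + s)) M (fun j => ℓ * j + r) ?_ ?_ ?_]
    · apply Finset.sum_congr rfl
      intro j hj
      rw [mem_range] at hj
      beta_reduce
      have hj' : j ≤ M := by omega
      have hMj : ℓ * M = ℓ * (M - j) + ℓ * j := by
        rw [← Nat.mul_add, Nat.sub_add_cancel hj']
      have eidx : ℓ * M + (r + s) - (ℓ * j + r) = ℓ * (M - j) + s := by omega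
      rw [eidx]
    · intro x _ y _ h
      beta_reduce at h
      exact Nat.eq_of_mul_eq_mul_left hℓ (by omega)
    · intro j hj
      beta_reduce
      have : ℓ * j ≤ ℓ * M := Nat.mul_le_mul_left ℓ hj
      omega
    · intro x hx hnx
      beta_reduce at hnx
      have hx' : ∀ j, x ≠ ℓ * j + r := by
        intro j hxj
        rcases le_or_gt j M with h | h
        · exact hnx j h hxj
        · have : ℓ * (M + 1) ≤ ℓ * j := Nat.mul_le_mul_left ℓ h
          rw [Nat.mul_add, Nat.mul_one] at this
          omega
      rw [hA x hx', zero_mul]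

lemma myHat_prod {ℓ : ℕ} (hℓ : 1 < ℓ) (f : ℕ → K⟦X⟧) (m : ℕ)
    (hf : ∀ i < m, mySupp ℓ 1 (f i)) (r : ℕ) (A : K⟦X⟧) (hA : mySupp ℓ r A) :
    (myHat ℓ r A * ∏ i ∈ range m, myHat ℓ 1 (f i) =
      myHat ℓ (r + m) (A * ∏ i ∈ range m, f i)) ∧
      mySupp ℓ (r + m) (A * ∏ i ∈ range m, f i) := by
  induction m with
  | zero => simpa using hA
  | succ m ih =>
    obtain ⟨h1, h2⟩ := ih (fun i hi => hf i (by omega))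
    have hfm := hf m (by omega)
    constructor
    · rw [Finset.prod_range_succ, Finset.prod_range_succ, ← mul_assoc, h1,
        myHat_mul hℓ (f m) h2, mul_assoc]
      rfl
    · rw [Finset.prod_range_succ, ← mul_assoc]
      have h3 := mySupp_mul h2 hfm
      rwa [Nat.add_assoc] at h3

lemma myHat_pow {ℓ : ℕ} (hℓ : 1 < ℓ) (f : ℕ → K⟦X⟧)
    (hf : ∀ i < ℓ, mySupp ℓ 1 (f i)) (q r : ℕ) (A : K⟦X⟧) (hA : mySupp ℓ r A) :
    (myHat ℓ r A * (∏ i ∈ range ℓ, myHat ℓ 1 (f i)) ^ q =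
      myHat ℓ (r + q * ℓ) (A * (∏ i ∈ range ℓ, f i) ^ q)) ∧
      mySupp ℓ (r + q * ℓ) (A * (∏ i ∈ range ℓ, f i) ^ q) := by
  induction q with
  | zero => simpa using hA
  | succ q ih =>
    obtain ⟨h1, h2⟩ := ih
    obtain ⟨k1, k2⟩ := myHat_prod hℓ f ℓ hf (r + q * ℓ) _ h2
    have e : r + q * ℓ + ℓ = r + (q + 1) * ℓ := by ring
    have eP : A * (∏ i ∈ range ℓ, f i) ^ q * ∏ i ∈ range ℓ, f i =
        A * (∏ i ∈ range ℓ, f i) ^ (q + 1) := by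
      rw [pow_succ, mul_assoc]
    constructor
    · rw [pow_succ, ← mul_assoc, h1, k1, e, eP]
    · rw [← eP, ← e]
      exact k2

end Aux

/-- The compression of a multiple Riordan array `(g; f_0, …, f_{ℓ-1})`: writing
`k = qℓ + m`, the entry `d̂_{n,k} = d_{nℓ−(ℓ−1)k,k}` is the `n`-th coefficient of
`ĝ · f̂_0⋯f̂_{m-1} · (f̂_0⋯f̂_{ℓ-1})^q`, where `ĝ` and `f̂_i` are the compressed series. -/

theorem stmt17 {K : Type*} [Field K] [CharZero K] (ℓ : ℕ) (hℓ : 2 ≤ ℓ)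
    (g : K⟦X⟧) (f : ℕ → K⟦X⟧)
    (hg : ∀ n, ¬ (ℓ ∣ n) → coeff n g = 0) (hg0 : constantCoeff g ≠ 0)
    (hf : ∀ i < ℓ, ∀ n, n % ℓ ≠ 1 → coeff n (f i) = 0)
    (hf1 : ∀ i < ℓ, coeff 1 (f i) ≠ 0)
    (d : ℕ → ℕ → K) (hd : ∀ n k, d n k = mrEntry ℓ g f n k)
    (dhat : ℕ → ℕ → K) (hdhat : ∀ n k, dhat n k = d (n * ℓ - (ℓ - 1) * k) k)
    (ghat : K⟦X⟧) (hghat : ghat = PowerSeries.mk fun k => coeff (ℓ * k) g)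
    (fhat : ℕ → K⟦X⟧)
    (hfhat : ∀ i, fhat i =
      PowerSeries.mk fun n => if n = 0 then 0 else coeff (ℓ * (n - 1) + 1) (f i)) :
    ∀ n k, k ≤ n →
      dhat n k = coeff n (ghat * (∏ i ∈ Finset.range (k % ℓ), fhat i) *
        (∏ i ∈ Finset.range ℓ, fhat i) ^ (k / ℓ)) := by
  have hℓ1 : 1 < ℓ := hℓ
  -- translate the hat series
  have hgh : ghat = myHat ℓ 0 g := by
    rw [hghat]
    ext n
    simp [myHat, coeff_mk]
  have hfh : ∀ i, fhat i = myHat ℓ 1 (f i) := by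
    intro i
    rw [hfhat]
    ext n
    simp only [myHat, coeff_mk]
    rcases Nat.eq_zero_or_pos n with h | h
    · simp [h]
    · rw [if_neg (by omega), if_neg (by omega)]
  -- support facts
  have hsg : mySupp ℓ 0 g := by
    intro m hm
    apply hg
    rintro ⟨j, rfl⟩
    exact hm j (by omega)
  have hsf : ∀ i < ℓ, mySupp ℓ 1 (f i) := by
    intro i hi m hm
    apply hf i hi
    intro hmod
    have h1 : ℓ * (m / ℓ) + m % ℓ = m := Nat.div_add_mod m ℓ
    rw [hmod] at h1
    exact hm (m / ℓ) h1.symm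
  intro n k hk
  set m := k % ℓ with hm
  set q := k / ℓ with hq
  have hmℓ : m < ℓ := Nat.mod_lt _ (by omega)
  obtain ⟨p1, p2⟩ := myHat_prod hℓ1 f m (fun i hi => hsf i (by omega)) 0 g hsg
  obtain ⟨w1, _⟩ := myHat_pow hℓ1 f hsf q (0 + m) _ p2
  have hkey : ghat * (∏ i ∈ Finset.range m, fhat i) *
      (∏ i ∈ Finset.range ℓ, fhat i) ^ q =
      myHat ℓ (0 + m + q * ℓ) (g * (∏ i ∈ Finset.range m, f i) *
        (∏ i ∈ Finset.range ℓ, f i) ^ q) := by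
    rw [hgh]
    have : (∏ i ∈ Finset.range m, fhat i) = ∏ i ∈ Finset.range m, myHat ℓ 1 (f i) :=
      Finset.prod_congr rfl fun i _ => hfh i
    rw [this]
    have : (∏ i ∈ Finset.range ℓ, fhat i) = ∏ i ∈ Finset.range ℓ, myHat ℓ 1 (f i) :=
      Finset.prod_congr rfl fun i _ => hfh i
    rw [this, p1, w1]
  have hek : 0 + m + q * ℓ = k := by
    rw [Nat.zero_add, Nat.mul_comm]
    exact Nat.mod_add_div k ℓ
  rw [hkey, hek]
  have harith : n * ℓ - (ℓ - 1) * k = ℓ * (n - k) + k := by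
    obtain ⟨e, rfl⟩ : ∃ e, ℓ = e + 2 := ⟨ℓ - 2, by omega⟩
    obtain ⟨c, rfl⟩ : ∃ c, n = c + k := ⟨n - k, by omega⟩
    have h1 : (c + k) * (e + 2) = (e + 2) * (c + k - k) + k + (e + 2 - 1) * k := by
      have : c + k - k = c := by omega
      rw [this]
      have : e + 2 - 1 = e + 1 := by omega
      rw [this]
      ring
    omega
  rw [hdhat, hd, harith, mrEntry, ← hm, ← hq]
  simp only [myHat, coeff_mk]
  rw [if_neg (by omega)]
end

section
/- Let (d_{n,k}) = (g; f_1,…,f_ℓ) be a multiple Riordan array, h an ℓ-th root of f_1⋯f_ℓ, and let (a_j) and (z_{m,j}) (0 ≤ m ≤ ℓ−1) be its A- and Z_m-sequences, i.e. A = Σ_j a_j t^{ℓj} satisfies t^ℓ·A(h) = h^ℓ and Z_m = Σ_j z_{m,j} t^{ℓj} satisfies g·f_1⋯f_m·(1 − t^ℓ·Z_m(h)) = g_0 f_{1,0}⋯f_{m,0}·t^m. Let (d̂_{n,k}) be the compression, extended by d̂_{p,q} = 0 whenever q > p. Then: (i) for all n ≥ k ≥ ℓ, d̂_{n,k} = Σ_{j=0}^{n}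 a_j d̂_{n−ℓ+j(ℓ−1), k+(j−1)ℓ}; and (ii) for each m ∈ {0,…,ℓ−1} and all n ≥ m+1, d̂_{n,m} = Σ_{j=0}^{n} z_{m,j} d̂_{n−1+j(ℓ−1), m+jℓ}. -/
open PowerSeries Finset

section Aux
variable {K : Type*} [CommRing K]

lemma coeffZero {V : K⟦X⟧} {r M : ℕ} (hd : (X : K⟦X⟧) ^ r ∣ V) (hM : M < r) :
    coeff M V = 0 := (X_pow_dvd_iff.mp hd) M hM

lemma coeff_psComp_mul (A h W : K⟦X⟧) (hh : constantCoeff h = 0) (M : ℕ) :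
    coeff M (psComp A h * W)
      = ∑ j ∈ range (M + 1), coeff j A * coeff M (h ^ j * W) := by
  have hz : ∀ i j : ℕ, i < j → coeff i (h ^ j) = 0 := fun i j hij =>
    coeffZero (pow_dvd_pow_of_dvd (X_dvd_iff.mpr hh) j) hij
  rw [coeff_mul]
  have step : ∀ p ∈ antidiagonal M,
      coeff p.1 (psComp A h) * coeff p.2 W
        = ∑ j ∈ range (M + 1), coeff j A * (coeff p.1 (h ^ j) * coeff p.2 W) := by
    intro p hp
    have hp1 : p.1 + 1 ≤ M + 1 := by
      have := Finset.HasAntidiagonal.mem_antidiagonal.mp hp; omega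
    simp only [psComp, coeff_mk]
    rw [Finset.sum_subset (range_subset_range.mpr hp1) (by
      intro j hj hj'
      have hlt : p.1 < j := by simp only [mem_range] at hj' ⊢; omega
      simp [hz _ _ hlt])]
    rw [Finset.sum_mul]
    exact Finset.sum_congr rfl fun j _ => mul_assoc _ _ _
  rw [Finset.sum_congr rfl step, Finset.sum_comm]
  exact Finset.sum_congr rfl fun j _ => by rw [← Finset.mul_sum, ← coeff_mul]

lemma core_sum (S h W : K⟦X⟧) (hh : constantCoeff h = 0) (ℓ : ℕ) (hℓ0 : 0 < ℓ)
    (hS : ∀ n, ¬ (ℓ ∣ n) → coeff n S = 0) (M n : ℕ) (hMn : M ≤ ℓ * n) :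
    coeff M (psComp S h * W)
      = ∑ j ∈ range (n + 1), coeff (ℓ * j) S * coeff M (h ^ (ℓ * j) * W) := by
  rw [coeff_psComp_mul S h W hh M]
  have hXh : (X : K⟦X⟧) ∣ h := X_dvd_iff.mpr hh
  rw [Finset.sum_subset (range_subset_range.mpr (by omega : M + 1 ≤ ℓ * n + 1)) (by
    intro j _ hj'
    have hMj : M < j := by simp only [mem_range] at hj'; omega
    rw [coeffZero (dvd_mul_of_dvd_left (pow_dvd_pow_of_dvd hXh j) W) hMj, mul_zero])]
  rw [← Finset.sum_filter_of_ne (p := fun j => ℓ ∣ j) (by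
    intro x _ hx
    by_contra hc
    exact hx (by rw [hS x hc, zero_mul]))]
  have himg : (range (ℓ * n + 1)).filter (fun j => ℓ ∣ j)
      = (range (n + 1)).image (fun j => ℓ * j) := by
    ext a
    simp only [mem_filter, mem_range, mem_image]
    constructor
    · rintro ⟨ha, c, rfl⟩
      exact ⟨c, by
        have : ℓ * c ≤ ℓ * n := by omega
        have := Nat.le_of_mul_le_mul_left this hℓ0
        omega, rfl⟩
    · rintro ⟨c, hc, rfl⟩
      have : ℓ * c ≤ ℓ * n := Nat.mul_le_mul_left _ (by omega)
      exact ⟨by omega, ⟨c, rfl⟩⟩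
  rw [himg, Finset.sum_image (by
    intro x _ y _ hxy
    exact Nat.eq_of_mul_eq_mul_left hℓ0 hxy)]

end Aux

/-- Sequence characterization of the compression of a multiple Riordan array:
the `A`- and `Z_m`-sequences of `(g; f_0, …, f_{ℓ-1})` also generate the rows of the
compression `d̂_{n,k} = d_{nℓ−(ℓ−1)k,k}` (extended by `0` above the diagonal). -/
theorem stmt18 {K : Type*} [Field K] [CharZero K] (ℓ : ℕ) (hℓ : 2 ≤ ℓ)
    (g : K⟦X⟧) (f : ℕ → K⟦X⟧)
    (hg : ∀ n, ¬ (ℓ ∣ n) → coeff n g = 0) (hg0 : constantCoeff g ≠ 0)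
    (hf : ∀ i < ℓ, ∀ n, n % ℓ ≠ 1 → coeff n (f i) = 0)
    (hf1 : ∀ i < ℓ, coeff 1 (f i) ≠ 0)
    (h : K⟦X⟧) (hhs : ∀ n, n % ℓ ≠ 1 → coeff n h = 0) (hh1 : coeff 1 h ≠ 0)
    (hhl : h ^ ℓ = ∏ i ∈ Finset.range ℓ, f i)
    (A : K⟦X⟧) (hAs : ∀ n, ¬ (ℓ ∣ n) → coeff n A = 0)
    (hA : X ^ ℓ * psComp A h = h ^ ℓ)
    (Z : ℕ → K⟦X⟧) (hZs : ∀ m < ℓ, ∀ n, ¬ (ℓ ∣ n) → coeff n (Z m) = 0)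
    (hZ : ∀ m < ℓ,
      g * (∏ i ∈ Finset.range m, f i) * (1 - X ^ ℓ * psComp (Z m) h)
        = C (constantCoeff g * ∏ i ∈ Finset.range m, coeff 1 (f i)) * X ^ m)
    (d : ℕ → ℕ → K) (hd : ∀ n k, d n k = mrEntry ℓ g f n k)
    (dhat : ℕ → ℕ → K)
    (hdhat : ∀ n k, dhat n k = if k ≤ n then d (n * ℓ - (ℓ - 1) * k) k else 0) :
    (∀ n k, ℓ ≤ k → k ≤ n →
      dhat n k = ∑ j ∈ Finset.range (n + 1),
        coeff (ℓ * j) A * dhat (n - ℓ + j * (ℓ - 1)) (k + j * ℓ - ℓ)) ∧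
    (∀ m < ℓ, ∀ n, m + 1 ≤ n →
      dhat n m = ∑ j ∈ Finset.range (n + 1),
        coeff (ℓ * j) (Z m) * dhat (n - 1 + j * (ℓ - 1)) (m + j * ℓ)) := by
  
  obtain ⟨L, rfl⟩ : ∃ L, ℓ = L + 1 := ⟨ℓ - 1, by omega⟩
  have hL : 1 ≤ L := by omega
  simp only [Nat.add_sub_cancel] at hdhat ⊢
  have hℓ0 : 0 < L + 1 := by omega
  have hch : constantCoeff h = 0 := by
    rw [← coeff_zero_eq_constantCoeff_apply]
    exact hhs 0 (by rw [Nat.zero_mod]; omega)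
  have hXh : (X : K⟦X⟧) ∣ h := X_dvd_iff.mpr hch
  have hXf : ∀ i, i < L + 1 → (X : K⟦X⟧) ∣ f i := by
    intro i hi
    refine X_dvd_iff.mpr ?_
    rw [← coeff_zero_eq_constantCoeff_apply]
    exact hf i hi 0 (by rw [Nat.zero_mod]; omega)
  have hXF : ∀ m, m ≤ L + 1 → (X : K⟦X⟧) ^ m ∣ ∏ i ∈ range m, f i := by
    intro m hm
    have hdv := Finset.prod_dvd_prod_of_dvd (s := range m) (fun _ => (X : K⟦X⟧)) f
      (fun a ha => hXf a (by simp only [mem_range] at ha; omega))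
    simpa using hdv
  have hXP : (X : K⟦X⟧) ^ (L + 1) ∣ ∏ i ∈ range (L + 1), f i := hXF (L + 1) le_rfl
  constructor
  · -- part (i)
    intro n k hk hkn
    have hℓn : L + 1 ≤ n := le_trans hk hkn
    have e1 : n * (L + 1) = L * n + n := by ring
    have e2 : L * k ≤ L * n := Nat.mul_le_mul le_rfl hkn
    set N := n * (L + 1) - L * k with hN
    have hNℓ : L + 1 ≤ N := by omega
    set M := N - (L + 1) with hM
    set m := k % (L + 1) with hmdef
    set q0 := (k - (L + 1)) / (L + 1) with hq0
    have hm : m < L + 1 := Nat.mod_lt _ hℓ0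
    have hmod : (k - (L + 1)) % (L + 1) = m := by
      rw [hmdef]
      conv_rhs => rw [show k = (k - (L + 1)) + (L + 1) by omega]
      rw [Nat.add_mod_right]
    have hdiv : k / (L + 1) = q0 + 1 := by
      rw [hq0]
      conv_lhs => rw [show k = (k - (L + 1)) + (L + 1) by omega]
      rw [Nat.add_div_right _ hℓ0]
    have hk0 : (L + 1) * q0 + m = k - (L + 1) := by
      rw [hq0, ← hmod]; exact Nat.div_add_mod _ _
    set P := ∏ i ∈ range (L + 1), f i with hP
    set Fm := ∏ i ∈ range m, f i with hFm
    set W := g * Fm * P ^ q0 with hW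
    have hAP : X ^ (L + 1) * psComp A h = P := hA.trans hhl
    have hstep : dhat n k = coeff M (psComp A h * W) := by
      rw [hdhat, if_pos hkn, hd, ← hN]
      simp only [mrEntry]
      rw [← hmdef, hdiv, ← hP, ← hFm]
      have hcolS : g * Fm * P ^ (q0 + 1) = X ^ (L + 1) * (psComp A h * W) := by
        rw [hW, ← hAP]; ring
      rw [hcolS, show N = M + (L + 1) by omega, coeff_X_pow_mul]
    have e3 : (L + 1) * n = n * (L + 1) := mul_comm _ _
    have hMn : M ≤ (L + 1) * n := by omega
    rw [hstep, core_sum A h W hch (L + 1) hℓ0 hAs M n hMn]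
    refine Finset.sum_congr rfl fun j _ => ?_
    congr 1
    have e4 : j * (L + 1) = j * L + j := by ring
    by_cases hc : k + j ≤ n
    · have hcolle : k + j * (L + 1) - (L + 1) ≤ n - (L + 1) + j * L := by omega
      rw [hdhat, if_pos hcolle, hd]
      simp only [mrEntry]
      have hcolrep : k + j * (L + 1) - (L + 1) = (k - (L + 1)) + j * (L + 1) := by omega
      have hcolmod : (k + j * (L + 1) - (L + 1)) % (L + 1) = m := by
        rw [hcolrep, Nat.add_mul_mod_self_right, hmod]
      have hcoldiv : (k + j * (L + 1) - (L + 1)) / (L + 1) = q0 + j := by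
        rw [hcolrep, Nat.add_mul_div_right _ _ hℓ0, ← hq0]
      have hrowN : (n - (L + 1) + j * L) * (L + 1) - L * (k + j * (L + 1) - (L + 1)) = M := by
        obtain ⟨r, hrn⟩ : ∃ r, n = r + (L + 1) := ⟨n - (L + 1), by omega⟩
        obtain ⟨s, hks⟩ : ∃ s, k = s + (L + 1) := ⟨k - (L + 1), by omega⟩
        rw [hrn, hks] at hN ⊢
        rw [Nat.add_sub_cancel, show s + (L + 1) + j * (L + 1) - (L + 1) = s + j * (L + 1) by omega]
        have q1 : (r + j * L) * (L + 1) = r * (L + 1) + j * L * (L + 1) := by ring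
        have q2 : L * (s + j * (L + 1)) = L * s + j * L * (L + 1) := by ring
        have q3 : (r + (L + 1)) * (L + 1) = r * (L + 1) + L * (L + 1) + (L + 1) := by ring
        have q4 : L * (s + (L + 1)) = L * s + L * (L + 1) := by ring
        omega
      rw [hrowN, hcolmod, hcoldiv, ← hP, ← hFm]
      congr 1
      rw [hW, ← hhl]
      ring
    · have hj1 : 1 ≤ j := by omega
      have e5 : (L + 1) * 1 ≤ (L + 1) * j := Nat.mul_le_mul le_rfl hj1
      have hnotle : ¬ (k + j * (L + 1) - (L + 1) ≤ n - (L + 1) + j * L) := by omega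
      rw [hdhat, if_neg hnotle]
      have d1 : (X : K⟦X⟧) ^ ((L + 1) * j) ∣ h ^ ((L + 1) * j) := pow_dvd_pow_of_dvd hXh _
      have d2 : (X : K⟦X⟧) ^ (k - (L + 1)) ∣ W := by
        have dm : (X : K⟦X⟧) ^ m ∣ Fm := hXF m hm.le
        have dp : (X : K⟦X⟧) ^ ((L + 1) * q0) ∣ P ^ q0 := by
          rw [pow_mul]; exact pow_dvd_pow_of_dvd hXP q0
        have hsplit : (X : K⟦X⟧) ^ (k - (L + 1)) = X ^ m * X ^ ((L + 1) * q0) := by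
          rw [← pow_add]; congr 1; omega
        rw [hsplit, hW]
        exact dvd_trans (mul_dvd_mul dm dp) ⟨g, by ring⟩
      have hdvd : (X : K⟦X⟧) ^ ((L + 1) * j + (k - (L + 1))) ∣ h ^ ((L + 1) * j) * W := by
        rw [pow_add]; exact mul_dvd_mul d1 d2
      have hMlt : M < (L + 1) * j + (k - (L + 1)) := by
        have f1 : n * (L + 1) + (L + 1) ≤ k * (L + 1) + j * (L + 1) := by
          have hmm := Nat.mul_le_mul (show n + 1 ≤ k + j by omega) (le_refl (L + 1))
          calc n * (L + 1) + (L + 1) = (n + 1) * (L + 1) := by ring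
            _ ≤ (k + j) * (L + 1) := hmm
            _ = k * (L + 1) + j * (L + 1) := by ring
        have f2 : k * (L + 1) = L * k + k := by ring
        have f3 : j * (L + 1) = (L + 1) * j := mul_comm _ _
        omega
      exact coeffZero hdvd hMlt
  · -- part (ii)
    intro m hm n hn
    have hmn : m ≤ n := by omega
    have f2 : (m + 1) * (L + 1) ≤ n * (L + 1) := Nat.mul_le_mul hn le_rfl
    have f3 : (m + 1) * (L + 1) = L * m + m + L + 1 := by ring
    have f1 : L * m ≤ L * n := Nat.mul_le_mul le_rfl hmn
    have e1 : n * (L + 1) = L * n + n := by ring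
    set N := n * (L + 1) - L * m with hN
    have hNbig : m + L + 1 ≤ N := by omega
    set M := N - (L + 1) with hM
    set Fm := ∏ i ∈ range m, f i with hFm
    set P := ∏ i ∈ range (L + 1), f i with hP
    have hmmod : m % (L + 1) = m := Nat.mod_eq_of_lt hm
    have hmdiv : m / (L + 1) = 0 := Nat.div_eq_of_lt hm
    have hstep : dhat n m = coeff N (g * Fm) := by
      rw [hdhat, if_pos hmn, hd, ← hN]
      simp only [mrEntry]
      rw [hmmod, hmdiv, pow_zero, mul_one, ← hFm]
    have hsplit : g * Fm = C (constantCoeff g * ∏ i ∈ range m, coeff 1 (f i)) * X ^ m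
        + X ^ (L + 1) * (psComp (Z m) h * (g * Fm)) := by
      have := hZ m hm
      rw [← hFm] at this
      linear_combination this
    have hstep2 : coeff N (g * Fm) = coeff M (psComp (Z m) h * (g * Fm)) := by
      conv_lhs => rw [hsplit]
      rw [map_add, coeff_C_mul, coeff_X_pow, if_neg (show N ≠ m by omega),
        mul_zero, zero_add, show N = M + (L + 1) by omega, coeff_X_pow_mul]
    have f4 : (L + 1) * n = n * (L + 1) := mul_comm _ _
    have hMn : M ≤ (L + 1) * n := by omega
    rw [hstep, hstep2, core_sum (Z m) h (g * Fm) hch (L + 1) hℓ0 (hZs m hm) M n hMn]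
    refine Finset.sum_congr rfl fun j _ => ?_
    congr 1
    have e4 : j * (L + 1) = j * L + j := by ring
    by_cases hc : m + j + 1 ≤ n
    · have hcolle : m + j * (L + 1) ≤ n - 1 + j * L := by omega
      rw [hdhat, if_pos hcolle, hd]
      simp only [mrEntry]
      have hcolmod : (m + j * (L + 1)) % (L + 1) = m := by
        rw [Nat.add_mul_mod_self_right, hmmod]
      have hcoldiv : (m + j * (L + 1)) / (L + 1) = j := by
        rw [Nat.add_mul_div_right _ _ hℓ0, hmdiv, zero_add]
      have hrowN : (n - 1 + j * L) * (L + 1) - L * (m + j * (L + 1)) = M := by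
        obtain ⟨r, hrn⟩ : ∃ r, n = r + 1 := ⟨n - 1, by omega⟩
        rw [hrn] at hN ⊢
        rw [Nat.add_sub_cancel]
        have q1 : (r + j * L) * (L + 1) = r * (L + 1) + j * L * (L + 1) := by ring
        have q2 : L * (m + j * (L + 1)) = L * m + j * L * (L + 1) := by ring
        have q3 : (r + 1) * (L + 1) = r * (L + 1) + (L + 1) := by ring
        omega
      rw [hrowN, hcolmod, hcoldiv, ← hP, ← hFm]
      congr 1
      rw [← hhl]
      ring
    · have hj1 : 1 ≤ j := by omega
      have e5 : (L + 1) * 1 ≤ (L + 1) * j := Nat.mul_le_mul le_rfl hj1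
      have hnotle : ¬ (m + j * (L + 1) ≤ n - 1 + j * L) := by omega
      rw [hdhat, if_neg hnotle]
      have d1 : (X : K⟦X⟧) ^ ((L + 1) * j) ∣ h ^ ((L + 1) * j) := pow_dvd_pow_of_dvd hXh _
      have d2 : (X : K⟦X⟧) ^ m ∣ g * Fm :=
        dvd_trans (hXF m hm.le) (dvd_mul_left Fm g)
      have hdvd : (X : K⟦X⟧) ^ ((L + 1) * j + m) ∣ h ^ ((L + 1) * j) * (g * Fm) := by
        rw [pow_add]; exact mul_dvd_mul d1 d2
      have hMlt : M < (L + 1) * j + m := by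
        have f5 : n * (L + 1) ≤ (m + j) * (L + 1) := Nat.mul_le_mul (by omega) le_rfl
        have f6 : (m + j) * (L + 1) = L * m + m + j * (L + 1) := by ring
        have f7 : j * (L + 1) = (L + 1) * j := mul_comm _ _
        omega
      exact coeffZero hdvd hMlt
end

section
/- Let (d_{n,k}) = (g; f_1,…,f_ℓ) be a multiple Riordan array over ℝ and let (d̂_{n,k})_{n,k≥0} be its compression (with d̂_{n,k} = 0 for k > n). If the coefficient sequence (g_k)_{k≥0} of ĝ and, for each i = 1,…,ℓ, the coefficient sequence (f_{i,k})_{k≥0} of f̂_i are Pólya frequency sequences — i.e. the Toeplitz matrices (g_{p−q})_{p,q≥0} and (f_{i,p−q})_{p,q≥0} (entries with negative subscript set to 0) are totally positive — then the matrix (d̂_{n,k})_{n,k≥0} is totally positive: for every r ≥ 1 and all strictly increasing indices n_1 < ⋯ < n_r and k_1 < ⋯ < k_r, det( d̂_{n_a, k_b} )_{1≤a,b≤r} ≥ 0. -/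
open PowerSeries Finset

/-- An infinite real matrix is totally positive if every minor with strictly increasing
row and column indices is nonnegative. -/
def IsTotallyPositive (M : ℕ → ℕ → ℝ) : Prop :=
  ∀ (r : ℕ) (rows cols : Fin r → ℕ), StrictMono rows → StrictMono cols →
    0 ≤ (Matrix.of fun a b => M (rows a) (cols b)).det

/-- The Toeplitz matrix of a sequence (entries with negative subscript set to `0`). -/
def toeplitzOf (c : ℕ → ℝ) : ℕ → ℕ → ℝ := fun p q => if q ≤ p then c (p - q) else 0

/-- A real sequence is a Pólya frequency sequence if its Toeplitz matrix is totally
positive. -/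
def IsPolyaFrequency (c : ℕ → ℝ) : Prop := IsTotallyPositive (toeplitzOf c)

section Aux
open Equiv

namespace CB
variable {r T : ℕ}

noncomputable def monoPart (p : Fin r → Fin T) : Fin r → Fin T := by
  classical
  exact if h : (Finset.image p Finset.univ).card = r
    then (Finset.image p Finset.univ).orderEmbOfFin h else p

noncomputable def permPart (p : Fin r → Fin T) : Equiv.Perm (Fin r) := by
  classical
  by_cases h : Function.Injective p
  · have hc : (Finset.image p Finset.univ).card = r := by
      rw [Finset.card_image_of_injective _ h, Finset.card_univ, Fintype.card_fin]
    refine Equiv.ofBijective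
      (fun i => ((Finset.image p Finset.univ).orderIsoOfFin hc).symm
        ⟨p i, by simp⟩) ?_
    rw [← Finite.injective_iff_bijective]
    intro a b hab
    apply h
    have := congrArg ((Finset.image p Finset.univ).orderIsoOfFin hc) hab
    simp only [OrderIso.apply_symm_apply] at this
    exact congrArg Subtype.val this
  · exact 1

lemma hcard {p : Fin r → Fin T} (h : Function.Injective p) :
    (Finset.image p Finset.univ).card = r := by
  rw [Finset.card_image_of_injective _ h, Finset.card_univ, Fintype.card_fin]

lemma monoPart_of_inj {p : Fin r → Fin T} (h : Function.Injective p) :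
    monoPart p = (Finset.image p Finset.univ).orderEmbOfFin (hcard h) := by
  rw [monoPart, dif_pos (hcard h)]

lemma permPart_of_inj {p : Fin r → Fin T} (h : Function.Injective p) (i : Fin r) :
    ((Finset.image p Finset.univ).orderIsoOfFin (hcard h)) (permPart p i) = ⟨p i, by simp⟩ := by
  rw [permPart]
  rw [dif_pos h]
  simp [Equiv.ofBijective]

lemma monoPart_comp_permPart {p : Fin r → Fin T} (h : Function.Injective p) :
    monoPart p ∘ permPart p = p := by
  funext i
  have := permPart_of_inj h i
  rw [monoPart_of_inj h]
  simp only [Function.comp_apply]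
  rw [← Finset.coe_orderIsoOfFin_apply, this]

lemma monoPart_strictMono {p : Fin r → Fin T} (h : Function.Injective p) :
    StrictMono (monoPart p) := by
  rw [monoPart_of_inj h]; exact (Finset.orderEmbOfFin _ _).strictMono

open scoped Classical in
theorem cauchy_binet (A : Matrix (Fin r) (Fin T) ℝ) (B : Matrix (Fin T) (Fin r) ℝ) :
    (A * B).det = ∑ g ∈ Finset.univ.filter (fun g : Fin r → Fin T => StrictMono g),
      (A.submatrix id g).det * (B.submatrix g id).det := by
  have step1 : (A * B).det
      = ∑ p : Fin r → Fin T, (∏ i, B (p i) i) * (A.submatrix id p).det := by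
    calc (A * B).det
        = ∑ σ : Perm (Fin r), (Equiv.Perm.sign σ : ℝ) * ∏ i, ∑ t, A (σ i) t * B t i := by
          simp [Matrix.det_apply', Matrix.mul_apply]
      _ = ∑ σ : Perm (Fin r), ∑ p : Fin r → Fin T,
            (Equiv.Perm.sign σ : ℝ) * ∏ i, A (σ i) (p i) * B (p i) i := by
          refine Finset.sum_congr rfl fun σ _ => ?_
          rw [Finset.prod_univ_sum, ← Finset.mul_sum]
          simp [Fintype.piFinset_univ]
      _ = ∑ p : Fin r → Fin T, ∑ σ : Perm (Fin r),
            (Equiv.Perm.sign σ : ℝ) * ∏ i, A (σ i) (p i) * B (p i) i := Finset.sum_comm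
      _ = ∑ p : Fin r → Fin T, (∏ i, B (p i) i) * (A.submatrix id p).det := by
          refine Finset.sum_congr rfl fun p _ => ?_
          rw [Matrix.det_apply', Finset.mul_sum]
          refine Finset.sum_congr rfl fun σ _ => ?_
          rw [Finset.prod_mul_distrib]
          simp [Matrix.submatrix_apply]
          ring
  rw [step1]
  have step2 : ∑ p : Fin r → Fin T, (∏ i, B (p i) i) * (A.submatrix id p).det
      = ∑ p ∈ Finset.univ.filter (fun p : Fin r → Fin T => Function.Injective p),
          (∏ i, B (p i) i) * (A.submatrix id p).det := by
    symm
    apply Finset.sum_filter_of_ne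
    intro p _ hne
    by_contra hinj
    rw [Function.not_injective_iff] at hinj
    obtain ⟨a, b, hab, hne'⟩ := hinj
    exact hne (by
      rw [Matrix.det_zero_of_column_eq hne'
        (fun k => by simp [Matrix.submatrix_apply, hab]), mul_zero])
  rw [step2]
  rw [show (Finset.univ.filter (fun g : Fin r → Fin T => StrictMono g)).sum
        (fun g => (A.submatrix id g).det * (B.submatrix g id).det)
      = ∑ x ∈ (Finset.univ.filter (fun g : Fin r → Fin T => StrictMono g)) ×ˢ
          (Finset.univ : Finset (Perm (Fin r))),
          (∏ i, B (x.1 (x.2 i)) i) * (A.submatrix id (x.1 ∘ x.2)).det from ?_]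
  · -- main bijection
    refine Finset.sum_nbij' (fun p => (monoPart p, permPart p)) (fun x => x.1 ∘ x.2)
      ?_ ?_ ?_ ?_ ?_
    · intro p hp
      rw [Finset.mem_filter] at hp
      simp only [Finset.mem_product, Finset.mem_filter, Finset.mem_univ, true_and, and_true]
      exact monoPart_strictMono hp.2
    · intro x hx
      simp only [Finset.mem_product, Finset.mem_filter, Finset.mem_univ, true_and, and_true] at hx
      simp only [Finset.mem_filter, Finset.mem_univ, true_and]
      exact hx.injective.comp x.2.injective
    · intro p hp
      rw [Finset.mem_filter] at hp
      exact monoPart_comp_permPart hp.2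
    · intro x hx
      simp only [Finset.mem_product, Finset.mem_filter, Finset.mem_univ, true_and, and_true] at hx
      obtain ⟨g, σ⟩ := x
      have hginj : Function.Injective (g ∘ σ) := hx.injective.comp σ.injective
      have himg : Finset.image (g ∘ σ) Finset.univ = Finset.image g Finset.univ := by
        ext t; simp only [Finset.mem_image, Finset.mem_univ, true_and, Function.comp_apply]
        constructor
        · rintro ⟨i, rfl⟩; exact ⟨σ i, rfl⟩
        · rintro ⟨i, rfl⟩; exact ⟨σ.symm i, by simp⟩
      have hg : g = (Finset.image (g ∘ σ) Finset.univ).orderEmbOfFin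
          (by rw [himg]; exact hcard hx.injective) := by
        apply Finset.orderEmbOfFin_unique
        · intro i; rw [himg]; simp
        · exact hx
      have h1 : monoPart (g ∘ σ) = g := by
        rw [monoPart_of_inj hginj]; exact hg.symm
      have h2 : permPart (g ∘ σ) = σ := by
        ext i
        have hp := permPart_of_inj hginj i
        have : ((Finset.image (g ∘ σ) Finset.univ).orderIsoOfFin (hcard hginj)) (σ i)
            = ⟨(g ∘ σ) i, by simp⟩ := by
          apply Subtype.ext
          rw [Finset.coe_orderIsoOfFin_apply]
          exact (congrFun hg (σ i)).symm
        have h3 := ((Finset.image (g ∘ σ) Finset.univ).orderIsoOfFin (hcard hginj)).injective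
          (hp.trans this.symm)
        rw [h3]
      rw [Prod.mk.injEq]; exact ⟨h1, h2⟩
    · intro p hp
      rw [Finset.mem_filter] at hp
      have h := monoPart_comp_permPart hp.2
      have h' : ∀ i, monoPart p (permPart p i) = p i := fun i => congrFun h i
      simp only [h, h']
  · rw [Finset.sum_product]
    refine Finset.sum_congr rfl fun g hg => ?_
    simp only [Finset.mem_filter, Finset.mem_univ, true_and] at hg
    have : ∀ σ : Perm (Fin r), (A.submatrix id (g ∘ σ)).det
        = (Equiv.Perm.sign σ : ℝ) * (A.submatrix id g).det := by
      intro σ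
      rw [show A.submatrix id (g ∘ ⇑σ) = (A.submatrix id g).submatrix id ⇑σ by
        rw [Matrix.submatrix_submatrix]; rfl]
      exact Matrix.det_permute' σ _
    simp_rw [this]
    rw [show (B.submatrix g id).det
        = ∑ σ : Perm (Fin r), (Equiv.Perm.sign σ : ℝ) * ∏ i, B (g (σ i)) i from ?_]
    · rw [Finset.mul_sum]
      refine Finset.sum_congr rfl fun σ _ => ?_
      ring
    · rw [Matrix.det_apply']
      rfl

end CB
end Aux

def IsTPColsLT (K : ℕ) (M : ℕ → ℕ → ℝ) : Prop :=
  ∀ (r : ℕ) (rows cols : Fin r → ℕ), StrictMono rows → StrictMono cols →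
    (∀ b, cols b < K) → 0 ≤ (Matrix.of fun a b => M (rows a) (cols b)).det

lemma isTotallyPositive_of_colsLT {M : ℕ → ℕ → ℝ} (h : ∀ K, IsTPColsLT K M) :
    IsTotallyPositive M := by
  intro r rows cols hr hc
  rcases Nat.eq_zero_or_pos r with rfl | hp
  · simp [Matrix.det_isEmpty]
  · refine h (cols ⟨r - 1, by omega⟩ + 1) r rows cols hr hc fun b => ?_
    have : b ≤ (⟨r - 1, by omega⟩ : Fin r) := by
      rcases b with ⟨b, hb⟩; simp [Fin.le_def]; omega
    exact Nat.lt_succ_of_le (hc.monotone this)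

lemma tpColsLT_mul (A B : ℕ → ℕ → ℝ) (hAlow : ∀ n j, n < j → A n j = 0)
    (hA : IsTotallyPositive A) (K : ℕ) (hB : IsTPColsLT K B) :
    IsTPColsLT K (fun n k => ∑ j ∈ Finset.range (n + 1), A n j * B j k) := by
  intro r rows cols hr hc hK
  rcases Nat.eq_zero_or_pos r with rfl | hp
  · simp [Matrix.det_isEmpty]
  set T := rows ⟨r - 1, by omega⟩ + 1 with hT
  have hle : ∀ a : Fin r, rows a + 1 ≤ T := by
    intro a
    have : a ≤ (⟨r - 1, by omega⟩ : Fin r) := by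
      rcases a with ⟨a, ha⟩; simp [Fin.le_def]; omega
    have := hr.monotone this
    omega
  have key : (Matrix.of fun a b => ∑ j ∈ Finset.range (rows a + 1), A (rows a) j * B j (cols b))
      = (Matrix.of fun (a : Fin r) (t : Fin T) => A (rows a) (t : ℕ))
        * (Matrix.of fun (t : Fin T) (b : Fin r) => B (t : ℕ) (cols b)) := by
    ext a b
    rw [Matrix.mul_apply]
    simp only [Matrix.of_apply]
    rw [show (∑ t : Fin T, A (rows a) (t : ℕ) * B (t : ℕ) (cols b))
        = ∑ j ∈ Finset.range T, A (rows a) j * B j (cols b) from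
      Fin.sum_univ_eq_sum_range (fun j => A (rows a) j * B j (cols b)) T]
    apply Finset.sum_subset (Finset.range_subset_range.2 (hle a))
    intro j hjT hj
    rw [Finset.mem_range] at hj
    rw [hAlow _ _ (by omega), zero_mul]
  show 0 ≤ (Matrix.of fun a b => ∑ j ∈ Finset.range (rows a + 1), A (rows a) j * B j (cols b)).det
  rw [key, CB.cauchy_binet]
  apply Finset.sum_nonneg
  intro g hg
  rw [Finset.mem_filter] at hg
  apply mul_nonneg
  · have := hA r rows (fun b => (g b : ℕ)) hr
      (fun a b hab => by exact_mod_cast hg.2 hab)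
    exact this
  · exact hB r (fun a => (g a : ℕ)) cols
      (fun a b hab => by exact_mod_cast hg.2 hab) hc hK

/-- Toeplitz-with-delta-first-column matrix. -/
def colZeroDelta (w : ℕ → ℝ) : ℕ → ℕ → ℝ := fun n j =>
  if j = 0 then (if n = 0 then 1 else 0) else toeplitzOf w n j

lemma colZeroDelta_lower (w : ℕ → ℝ) : ∀ n j, n < j → colZeroDelta w n j = 0 := by
  intro n j h
  unfold colZeroDelta toeplitzOf
  rcases Nat.eq_zero_or_pos j with rfl | hj
  · omega
  · rw [if_neg (by omega), if_neg (by omega)]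

/-- Determinant reduction for a matrix whose first row and column are `e_0`. -/
lemma det_border {m : ℕ} (M : Matrix (Fin (m + 1)) (Fin (m + 1)) ℝ)
    (h00 : M 0 0 = 1) (h0 : ∀ i : Fin m, M i.succ 0 = 0) :
    M.det = (M.submatrix Fin.succ Fin.succ).det := by
  rw [Matrix.det_succ_column_zero]
  rw [Finset.sum_eq_single 0]
  · simp [h00, Fin.succAbove_zero]
  · intro i _ hi
    rcases Fin.eq_succ_of_ne_zero hi with ⟨j, rfl⟩
    rw [h0 j]
    ring
  · simp

lemma strictMono_pred {r : ℕ} {s : Fin r → ℕ} (hs : StrictMono s) (h1 : ∀ a, 1 ≤ s a) :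
    StrictMono fun a => s a - 1 := by
  intro a b hab
  show s a - 1 < s b - 1
  have := hs hab
  have := h1 a
  omega

lemma tp_colZeroDelta (w : ℕ → ℝ) (hw : IsPolyaFrequency w) :
    IsTotallyPositive (colZeroDelta w) := by
  intro r rows cols hr hc
  rcases Nat.eq_zero_or_pos r with rfl | hp
  · simp [Matrix.det_isEmpty]
  obtain ⟨m, rfl⟩ : ∃ m, r = m + 1 := ⟨r - 1, by omega⟩
  by_cases hc0 : cols 0 = 0
  · -- column 0 present
    by_cases hr0 : rows 0 = 0
    · -- row 0 present: border reduction
      rw [det_border]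
      · have hrows : ∀ a : Fin m, 1 ≤ rows a.succ := by
          intro a
          have := hr (show (0 : Fin (m+1)) < a.succ from Fin.succ_pos a)
          omega
        have hcols : ∀ b : Fin m, 1 ≤ cols b.succ := by
          intro b
          have := hc (show (0 : Fin (m+1)) < b.succ from Fin.succ_pos b)
          omega
        have : (Matrix.of fun a b => colZeroDelta w (rows a) (cols b)).submatrix Fin.succ Fin.succ
            = Matrix.of fun (a b : Fin m) => toeplitzOf w (rows a.succ) (cols b.succ) := by
          ext a b
          simp only [Matrix.submatrix_apply, Matrix.of_apply, colZeroDelta]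
          rw [if_neg (by have := hcols b; omega)]
        rw [this]
        exact hw m (fun a => rows a.succ) (fun b => cols b.succ)
          (fun a b hab => hr (Fin.succ_lt_succ_iff.2 hab))
          (fun a b hab => hc (Fin.succ_lt_succ_iff.2 hab))
      · simp [Matrix.of_apply, colZeroDelta, hc0, hr0]
      · intro i
        have h1 : (0 : Fin _) < i.succ := Fin.succ_pos i
        have := hr h1
        simp only [Matrix.of_apply, colZeroDelta]
        rw [if_pos hc0, if_neg (by omega)]
    · -- column 0 is zero column
      rw [Matrix.det_eq_zero_of_column_eq_zero 0]
      intro a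
      have : rows 0 ≤ rows a := hr.monotone (Fin.zero_le a)
      simp only [Matrix.of_apply, colZeroDelta]
      rw [if_pos hc0, if_neg (by omega)]
  · -- no column 0: pure Toeplitz minor
    have hcb : ∀ b, cols b ≠ 0 := by
      intro b hb
      have : cols 0 ≤ cols b := hc.monotone (Fin.zero_le b)
      omega
    have : (Matrix.of fun a b => colZeroDelta w (rows a) (cols b))
        = Matrix.of fun a b => toeplitzOf w (rows a) (cols b) := by
      ext a b
      simp only [Matrix.of_apply, colZeroDelta]
      rw [if_neg (hcb b)]
    rw [this]
    exact hw (m+1) rows cols hr hc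

/-- 1 ⊕ Q. -/
def oneOplus (Q : ℕ → ℕ → ℝ) : ℕ → ℕ → ℝ := fun n k =>
  if n = 0 then (if k = 0 then 1 else 0)
  else if k = 0 then 0 else Q (n - 1) (k - 1)

lemma tpColsLT_oneOplus (Q : ℕ → ℕ → ℝ) (K : ℕ) (hQ : IsTPColsLT K Q) :
    IsTPColsLT (K + 1) (oneOplus Q) := by
  intro r rows cols hr hc hK
  rcases Nat.eq_zero_or_pos r with rfl | hp
  · simp [Matrix.det_isEmpty]
  obtain ⟨m, rfl⟩ : ∃ m, r = m + 1 := ⟨r - 1, by omega⟩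
  by_cases hc0 : cols 0 = 0
  · by_cases hr0 : rows 0 = 0
    · rw [det_border]
      · have hrows : ∀ a : Fin m, 1 ≤ rows a.succ := fun a => by
          have := hr (Fin.succ_pos a); omega
        have hcols : ∀ b : Fin m, 1 ≤ cols b.succ := fun b => by
          have := hc (Fin.succ_pos b); omega
        have heq : (Matrix.of fun a b => oneOplus Q (rows a) (cols b)).submatrix Fin.succ Fin.succ
            = Matrix.of fun (a b : Fin m) => Q (rows a.succ - 1) (cols b.succ - 1) := by
          ext a b
          simp only [Matrix.submatrix_apply, Matrix.of_apply, oneOplus]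
          rw [if_neg (by have := hrows a; omega), if_neg (by have := hcols b; omega)]
        rw [heq]
        exact hQ m (fun a => rows a.succ - 1) (fun b => cols b.succ - 1)
          (strictMono_pred (fun a b hab => hr (Fin.succ_lt_succ_iff.2 hab)) hrows)
          (strictMono_pred (fun a b hab => hc (Fin.succ_lt_succ_iff.2 hab)) hcols)
          (fun b => by
            have := hK b.succ; have := hcols b
            show cols b.succ - 1 < K; omega)
      · simp [Matrix.of_apply, oneOplus, hc0, hr0]
      · intro i
        have := hr (Fin.succ_pos i)
        simp only [Matrix.of_apply, oneOplus]
        rw [if_neg (by omega), if_pos hc0]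

    · rw [Matrix.det_eq_zero_of_column_eq_zero 0]
      intro a
      have : rows 0 ≤ rows a := hr.monotone (Fin.zero_le a)
      simp only [Matrix.of_apply, oneOplus]
      rw [if_neg (by omega), if_pos hc0]
  · have hcb : ∀ b, 1 ≤ cols b := by
      intro b
      have : cols 0 ≤ cols b := hc.monotone (Fin.zero_le b)
      omega
    by_cases hr0 : rows 0 = 0
    · rw [Matrix.det_eq_zero_of_row_eq_zero 0]
      intro b
      simp only [Matrix.of_apply, oneOplus]
      rw [if_pos hr0, if_neg (by have := hcb b; omega)]
    · have hrb : ∀ a, 1 ≤ rows a := by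
        intro a
        have : rows 0 ≤ rows a := hr.monotone (Fin.zero_le a)
        omega
      have heq : (Matrix.of fun a b => oneOplus Q (rows a) (cols b))
          = Matrix.of fun a b => Q (rows a - 1) (cols b - 1) := by
        ext a b
        simp only [Matrix.of_apply, oneOplus]
        rw [if_neg (by have := hrb a; omega), if_neg (by have := hcb b; omega)]
      rw [heq]
      exact hQ (m+1) (fun a => rows a - 1) (fun b => cols b - 1)
        (strictMono_pred hr hrb) (strictMono_pred hc hcb)
        (fun b => by
          have := hK b; have := hcb b
          show cols b - 1 < K; omega)

noncomputable def NmatOf (v : ℕ → ℕ → ℝ) : ℕ → ℕ → ℝ := fun j k =>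
  if k ≤ j then coeff (j - k) (∏ s ∈ Finset.range k, PowerSeries.mk (v s)) else 0

lemma NmatOf_eq_mul (v : ℕ → ℕ → ℝ) :
    NmatOf v = fun j k => ∑ i ∈ Finset.range (j + 1),
      colZeroDelta (v 0) j i * oneOplus (NmatOf fun s => v (s + 1)) i k := by
  funext j k
  rcases k with _ | k'
  · -- k = 0
    simp only [NmatOf, Nat.zero_le, if_true, Finset.prod_range_zero, Nat.sub_zero,
      PowerSeries.coeff_one]
    rw [Finset.sum_eq_single 0]
    · simp [oneOplus, colZeroDelta]
    · intro i _ hi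
      simp [oneOplus, hi]
    · simp
  · by_cases h : k' + 1 ≤ j
    · have hL : NmatOf v j (k' + 1)
          = ∑ a ∈ Finset.range (j - (k' + 1) + 1),
              v 0 a * coeff (j - (k' + 1) - a)
                (∏ s ∈ Finset.range k', PowerSeries.mk (v (s + 1))) := by
        simp only [NmatOf]
        rw [if_pos h, Finset.prod_range_succ', mul_comm, PowerSeries.coeff_mul,
          Finset.Nat.sum_antidiagonal_eq_sum_range_succ_mk]
        simp [PowerSeries.coeff_mk]
      rw [hL]
      have hR : (∑ i ∈ Finset.range (j + 1),
            colZeroDelta (v 0) j i * oneOplus (NmatOf fun s => v (s + 1)) i (k' + 1))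
          = ∑ i ∈ Finset.Icc (k' + 1) j,
              v 0 (j - i) * coeff (i - 1 - k')
                (∏ s ∈ Finset.range k', PowerSeries.mk (v (s + 1))) := by
        rw [← Finset.sum_subset (show Finset.Icc (k' + 1) j ⊆ Finset.range (j + 1) by
          intro i hi; rw [Finset.mem_Icc] at hi; rw [Finset.mem_range]; omega)]
        · apply Finset.sum_congr rfl
          intro i hi
          rw [Finset.mem_Icc] at hi
          simp only [colZeroDelta, oneOplus, NmatOf, toeplitzOf]
          rw [if_neg (by omega), if_pos (by omega : i ≤ j), if_neg (by omega),
            if_neg (by omega : ¬(k' + 1 = 0))]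
          rw [if_pos (by omega : k' + 1 - 1 ≤ i - 1)]
          simp only [Nat.add_sub_cancel]
        · intro i hiR hiI
          rw [Finset.mem_range] at hiR
          rw [Finset.mem_Icc, not_and_or] at hiI
          rcases Nat.eq_zero_or_pos i with rfl | hip
          · simp [oneOplus]
          · simp only [oneOplus, NmatOf]
            rw [if_neg (by omega), if_neg (by omega : ¬(k' + 1 = 0)),
              if_neg (by omega : ¬(k' + 1 - 1 ≤ i - 1)), mul_zero]
      rw [hR]
      apply Finset.sum_nbij' (fun a => j - a) (fun i => j - i)
      · intro a ha
        rw [Finset.mem_range] at ha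
        rw [Finset.mem_Icc]
        omega
      · intro i hi
        rw [Finset.mem_Icc] at hi
        rw [Finset.mem_range]
        omega
      · intro a ha
        rw [Finset.mem_range] at ha
        omega
      · intro i hi
        rw [Finset.mem_Icc] at hi
        omega
      · intro a ha
        rw [Finset.mem_range] at ha
        rw [show j - (j - a) = a by omega, show j - a - 1 - k' = j - (k' + 1) - a by omega]
    · simp only [NmatOf]
      rw [if_neg h]
      symm
      apply Finset.sum_eq_zero
      intro i hi
      rw [Finset.mem_range] at hi
      rcases Nat.eq_zero_or_pos i with rfl | hip
      · simp [oneOplus]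
      · simp only [oneOplus, NmatOf]
        rw [if_neg (by omega), if_neg (by omega : ¬(k' + 1 = 0)),
          if_neg (by omega : ¬(k' + 1 - 1 ≤ i - 1)), mul_zero]

lemma toeplitzOf_lower (c : ℕ → ℝ) : ∀ n j, n < j → toeplitzOf c n j = 0 := by
  intro n j h
  rw [toeplitzOf, if_neg (by omega)]

lemma NmatOf_tpColsLT (K : ℕ) : ∀ (v : ℕ → ℕ → ℝ), (∀ s, IsPolyaFrequency (v s)) →
    IsTPColsLT K (NmatOf v) := by
  induction K with
  | zero =>
    intro v hv r rows cols hr hc hK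
    rcases Nat.eq_zero_or_pos r with rfl | hp
    · simp [Matrix.det_isEmpty]
    · exact absurd (hK ⟨0, hp⟩) (Nat.not_lt_zero _)
  | succ K ih =>
    intro v hv
    rw [NmatOf_eq_mul]
    exact tpColsLT_mul _ _ (colZeroDelta_lower _) (tp_colZeroDelta _ (hv 0)) (K + 1)
      (tpColsLT_oneOplus _ K (ih (fun s => v (s + 1)) (fun s => hv (s + 1))))

def SuppAP (ℓ r : ℕ) (A : ℝ⟦X⟧) : Prop := ∀ n, (∀ m, n ≠ ℓ * m + r) → coeff n A = 0

def GoodPair (ℓ r : ℕ) (A Ahat : ℝ⟦X⟧) : Prop :=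
  SuppAP ℓ r A ∧ ∀ m, coeff m Ahat = coeff (ℓ * m + r) A

lemma goodPair_mul {ℓ r s : ℕ} (hℓ : 1 ≤ ℓ) {A B Ah Bh : ℝ⟦X⟧}
    (hA : GoodPair ℓ r A Ah) (hB : GoodPair ℓ s B Bh) :
    GoodPair ℓ (r + s) (A * B) (Ah * Bh) := by
  constructor
  · intro n hn
    rw [PowerSeries.coeff_mul]
    apply Finset.sum_eq_zero
    rintro ⟨a, b⟩ hab
    rw [Finset.HasAntidiagonal.mem_antidiagonal] at hab
    by_cases ha : ∀ i, a ≠ ℓ * i + r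
    · rw [hA.1 a ha, zero_mul]
    · push_neg at ha
      obtain ⟨i, rfl⟩ := ha
      by_cases hb : ∀ jj, b ≠ ℓ * jj + s
      · rw [hB.1 b hb, mul_zero]
      · push_neg at hb
        obtain ⟨jj, rfl⟩ := hb
        exact absurd (show n = ℓ * (i + jj) + (r + s) by rw [← hab]; ring) (hn (i + jj))
  · intro m
    rw [PowerSeries.coeff_mul, PowerSeries.coeff_mul,
      Finset.Nat.sum_antidiagonal_eq_sum_range_succ_mk,
      Finset.Nat.sum_antidiagonal_eq_sum_range_succ_mk]
    rw [Finset.sum_congr rfl (fun i (_ : i ∈ Finset.range (m+1)) => by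
      rw [hA.2, hB.2] :
      ∀ i ∈ Finset.range (m+1), coeff i Ah * coeff (m - i) Bh
        = coeff (ℓ * i + r) A * coeff (ℓ * (m - i) + s) B)]
    symm
    have himg : ((Finset.range (m+1)).image fun i => ℓ * i + r)
        ⊆ Finset.range (ℓ * m + (r + s) + 1) := by
      intro a ha
      rw [Finset.mem_image] at ha
      obtain ⟨i, hi, rfl⟩ := ha
      rw [Finset.mem_range] at hi ⊢
      have : ℓ * i ≤ ℓ * m := Nat.mul_le_mul_left _ (by omega)
      omega
    have hzero : ∀ a ∈ Finset.range (ℓ * m + (r + s) + 1),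
        a ∉ (Finset.range (m+1)).image (fun i => ℓ * i + r) →
        coeff a A * coeff (ℓ * m + (r + s) - a) B = 0 := by
      intro a ha hna
      by_cases h1 : ∀ i, a ≠ ℓ * i + r
      · rw [hA.1 a h1, zero_mul]
      · push_neg at h1
        obtain ⟨i, rfl⟩ := h1
        have him : m + 1 ≤ i := by
          by_contra hlt
          exact hna (Finset.mem_image.2 ⟨i, Finset.mem_range.2 (by omega), rfl⟩)
        rw [hB.1, mul_zero]
        intro jj hjj
        rw [Finset.mem_range] at ha
        have e1 : ℓ * m + (r + s) = ℓ * i + r + (ℓ * jj + s) := by omega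
        have e2 : ℓ * (i + jj) = ℓ * i + ℓ * jj := Nat.mul_add ℓ i jj
        have e3 : ℓ * m = ℓ * (i + jj) := by omega
        have : m = i + jj := Nat.eq_of_mul_eq_mul_left (by omega) e3
        omega
    rw [← Finset.sum_subset himg hzero]
    rw [Finset.sum_image (fun x _ y _ hxy =>
      Nat.eq_of_mul_eq_mul_left (show 0 < ℓ by omega) (by omega : ℓ * x = ℓ * y))]
    apply Finset.sum_congr rfl
    intro i hi
    rw [Finset.mem_range] at hi
    have e2 : ℓ * (m - i) + ℓ * i = ℓ * m := by
      rw [← Nat.mul_add]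
      congr 1
      omega
    have e3 : ℓ * m + (r + s) - (ℓ * i + r) = ℓ * (m - i) + s := by omega
    rw [e3]

lemma goodPair_one {ℓ : ℕ} (hℓ : 1 ≤ ℓ) : GoodPair ℓ 0 (1 : ℝ⟦X⟧) 1 := by
  constructor
  · intro n hn
    rw [PowerSeries.coeff_one, if_neg]
    intro h
    exact hn 0 (by omega)
  · intro m
    rw [PowerSeries.coeff_one, PowerSeries.coeff_one]
    rcases Nat.eq_zero_or_pos m with rfl | hm
    · simp
    · rw [if_neg (by omega), if_neg]
      intro h
      have : ℓ * 1 ≤ ℓ * m := Nat.mul_le_mul_left _ (by omega)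
      omega

lemma goodPair_prod {ℓ : ℕ} (hℓ : 1 ≤ ℓ) {F Fh : ℕ → ℝ⟦X⟧}
    (m : ℕ) (hF : ∀ i < m, GoodPair ℓ 1 (F i) (Fh i)) :
    GoodPair ℓ m (∏ i ∈ Finset.range m, F i) (∏ i ∈ Finset.range m, Fh i) := by
  induction m with
  | zero => simpa using goodPair_one hℓ
  | succ m ih =>
    rw [Finset.prod_range_succ, Finset.prod_range_succ]
    exact goodPair_mul hℓ (ih fun i hi => hF i (by omega)) (hF m (by omega))

lemma goodPair_pow {ℓ r : ℕ} (hℓ : 1 ≤ ℓ) {A Ah : ℝ⟦X⟧}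
    (hA : GoodPair ℓ r A Ah) (q : ℕ) : GoodPair ℓ (q * r) (A ^ q) (Ah ^ q) := by
  induction q with
  | zero => simpa using goodPair_one hℓ
  | succ q ih =>
    rw [pow_succ, pow_succ, Nat.succ_mul]
    exact goodPair_mul hℓ ih hA

lemma prod_mod_split {ℓ : ℕ} (hℓ : 1 ≤ ℓ) (w : ℕ → ℝ⟦X⟧) (k : ℕ) :
    (∏ s ∈ Finset.range k, w (s % ℓ))
      = (∏ i ∈ Finset.range (k % ℓ), w i) * (∏ i ∈ Finset.range ℓ, w i) ^ (k / ℓ) := by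
  induction k with
  | zero => simp
  | succ k ih =>
    rw [Finset.prod_range_succ, ih]
    have hmod := Nat.mod_lt k (show 0 < ℓ by omega)
    have hdm : ℓ * (k / ℓ) + k % ℓ = k := Nat.div_add_mod k ℓ
    by_cases h : k % ℓ + 1 = ℓ
    · have e1 : k + 1 = ℓ * (k / ℓ + 1) := by rw [Nat.mul_succ]; omega
      have e2 : (k + 1) % ℓ = 0 := by rw [e1]; exact Nat.mul_mod_right ℓ _
      have e3 : (k + 1) / ℓ = k / ℓ + 1 := by
        rw [e1]; exact Nat.mul_div_cancel_left _ (by omega)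
      have e4 : (∏ i ∈ Finset.range (k % ℓ), w i) * w (k % ℓ)
          = ∏ i ∈ Finset.range ℓ, w i := by
        rw [← Finset.prod_range_succ, h]
      rw [e2, e3, Finset.prod_range_zero, one_mul, pow_succ]
      calc (∏ i ∈ Finset.range (k % ℓ), w i) * (∏ i ∈ Finset.range ℓ, w i) ^ (k / ℓ)
            * w (k % ℓ)
          = ((∏ i ∈ Finset.range (k % ℓ), w i) * w (k % ℓ))
            * (∏ i ∈ Finset.range ℓ, w i) ^ (k / ℓ) := by ring
        _ = (∏ i ∈ Finset.range ℓ, w i) ^ (k / ℓ) * (∏ i ∈ Finset.range ℓ, w i) := by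
            rw [e4]; ring
    · have e1 : k + 1 = k % ℓ + 1 + ℓ * (k / ℓ) := by omega
      have e2 : (k + 1) % ℓ = k % ℓ + 1 := by
        rw [e1, Nat.add_mul_mod_self_left, Nat.mod_eq_of_lt (by omega)]
      have e3 : (k + 1) / ℓ = k / ℓ := by
        rw [e1, Nat.add_mul_div_left _ _ (show 0 < ℓ by omega),
          Nat.div_eq_of_lt (by omega), Nat.zero_add]
      rw [e2, e3, Finset.prod_range_succ]
      ring

lemma coeff_mul_toeplitz {gc : ℕ → ℝ} {H : ℝ⟦X⟧} {n k : ℕ} (hk : k ≤ n) :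
    coeff (n - k) (PowerSeries.mk gc * H)
      = ∑ j ∈ Finset.range (n + 1),
          toeplitzOf gc n j * (if k ≤ j then coeff (j - k) H else 0) := by
  rw [PowerSeries.coeff_mul, Finset.Nat.sum_antidiagonal_eq_sum_range_succ_mk]
  symm
  rw [← Finset.sum_subset (show Finset.Icc k n ⊆ Finset.range (n + 1) by
    intro j hj; rw [Finset.mem_Icc] at hj; rw [Finset.mem_range]; omega)]
  · apply Finset.sum_nbij' (fun j => n - j) (fun a => n - a)
    · intro j hj
      rw [Finset.mem_Icc] at hj
      rw [Finset.mem_range]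
      omega
    · intro a ha
      rw [Finset.mem_range] at ha
      rw [Finset.mem_Icc]
      omega
    · intro j hj
      rw [Finset.mem_Icc] at hj
      omega
    · intro a ha
      rw [Finset.mem_range] at ha
      omega
    · intro j hj
      rw [Finset.mem_Icc] at hj
      rw [toeplitzOf, if_pos (by omega : j ≤ n), if_pos (by omega : k ≤ j),
        PowerSeries.coeff_mk]
      rw [show n - k - (n - j) = j - k by omega]
  · intro j hjr hjI
    rw [Finset.mem_range] at hjr
    rw [Finset.mem_Icc, not_and_or] at hjI
    rw [if_neg (by omega), mul_zero]


/-- If the coefficient sequences of `ĝ` and of the `f̂_i` are Pólya frequency sequences,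
then the compression of the multiple Riordan array `(g; f_0, …, f_{ℓ-1})` is totally
positive. -/

theorem stmt19 (ℓ : ℕ) (hℓ : 2 ≤ ℓ)
    (g : ℝ⟦X⟧) (f : ℕ → ℝ⟦X⟧)
    (hg : ∀ n, ¬ (ℓ ∣ n) → coeff n g = 0) (hg0 : constantCoeff g ≠ 0)
    (hf : ∀ i < ℓ, ∀ n, n % ℓ ≠ 1 → coeff n (f i) = 0)
    (hf1 : ∀ i < ℓ, coeff 1 (f i) ≠ 0)
    (d : ℕ → ℕ → ℝ) (hd : ∀ n k, d n k = mrEntry ℓ g f n k)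
    (dhat : ℕ → ℕ → ℝ)
    (hdhat : ∀ n k, dhat n k = if k ≤ n then d (n * ℓ - (ℓ - 1) * k) k else 0)
    (hgPF : IsPolyaFrequency fun k => coeff (ℓ * k) g)
    (hfPF : ∀ i < ℓ, IsPolyaFrequency fun k => coeff (ℓ * k + 1) (f i)) :
    IsTotallyPositive dhat := by
  have hℓ1 : 1 ≤ ℓ := by omega
  have hgoodg : GoodPair ℓ 0 g (PowerSeries.mk fun m => coeff (ℓ * m) g) := by
    constructor
    · intro n' hn'
      apply hg
      rintro ⟨m', rfl⟩
      exact hn' m' (by omega)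
    · intro m
      rw [PowerSeries.coeff_mk, Nat.add_zero]
  have hgoodf : ∀ i < ℓ, GoodPair ℓ 1 (f i)
      (PowerSeries.mk fun m => coeff (ℓ * m + 1) (f i)) := by
    intro i hi
    constructor
    · intro n' hn'
      apply hf i hi
      intro hmod
      refine hn' (n' / ℓ) ?_
      have := Nat.div_add_mod n' ℓ
      omega
    · intro m
      rw [PowerSeries.coeff_mk]
  have hveq : dhat = fun n k => ∑ j ∈ Finset.range (n + 1),
      toeplitzOf (fun m => coeff (ℓ * m) g) n j
        * NmatOf (fun s m => coeff (ℓ * m + 1) (f (s % ℓ))) j k := by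
    funext n k
    rw [hdhat]
    by_cases hk : k ≤ n
    · rw [if_pos hk, hd, mrEntry]
      have hgood : GoodPair ℓ (0 + k % ℓ + k / ℓ * ℓ)
          (g * (∏ i ∈ Finset.range (k % ℓ), f i) * (∏ i ∈ Finset.range ℓ, f i) ^ (k / ℓ))
          ((PowerSeries.mk fun m => coeff (ℓ * m) g)
            * (∏ i ∈ Finset.range (k % ℓ), PowerSeries.mk fun m => coeff (ℓ * m + 1) (f i))
            * (∏ i ∈ Finset.range ℓ, PowerSeries.mk fun m => coeff (ℓ * m + 1) (f i))
              ^ (k / ℓ)) := by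
        apply goodPair_mul hℓ1
        · exact goodPair_mul hℓ1 hgoodg
            (goodPair_prod hℓ1 (k % ℓ) fun i hi =>
              hgoodf i (lt_of_lt_of_le hi (le_of_lt (Nat.mod_lt _ (by omega)))))
        · exact goodPair_pow hℓ1
            (goodPair_prod hℓ1 ℓ fun i hi => hgoodf i hi) (k / ℓ)
      have hoff : 0 + k % ℓ + k / ℓ * ℓ = k := by
        rw [Nat.zero_add, Nat.mod_add_div']
      rw [hoff] at hgood
      have hidx : n * ℓ - (ℓ - 1) * k = ℓ * (n - k) + k := by
        obtain ⟨a, rfl⟩ : ∃ a, n = k + a := ⟨n - k, by omega⟩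
        obtain ⟨e, rfl⟩ : ∃ e, ℓ = e + 1 := ⟨ℓ - 1, by omega⟩
        have h1 : (k + a) * (e + 1) = e * k + ((e + 1) * a + k) := by ring
        have h2 : e + 1 - 1 = e := by omega
        have h3 : k + a - k = a := by omega
        rw [h1, h2, h3, Nat.add_sub_cancel_left]
      rw [hidx]
      have h2 := hgood.2 (n - k)
      rw [← h2]
      rw [mul_assoc]
      rw [coeff_mul_toeplitz hk]
      apply Finset.sum_congr rfl
      intro j hj
      congr 1
      simp only [NmatOf]
      by_cases hkj : k ≤ j
      · rw [if_pos hkj, if_pos hkj]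
        congr 1
        exact (prod_mod_split hℓ1 (fun i => PowerSeries.mk fun m => coeff (ℓ * m + 1) (f i)) k).symm
      · rw [if_neg hkj, if_neg hkj]
    · rw [if_neg hk]
      symm
      apply Finset.sum_eq_zero
      intro j hj
      rw [Finset.mem_range] at hj
      simp only [NmatOf]
      rw [if_neg (by omega), mul_zero]
  rw [hveq]
  apply isTotallyPositive_of_colsLT
  intro K
  apply tpColsLT_mul _ _ (toeplitzOf_lower _) hgPF K
  exact NmatOf_tpColsLT K _ (fun s => hfPF (s % ℓ) (Nat.mod_lt _ (by omega)))
end
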